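/- Let N ≥ 3 be odd, φ ∈ ℝ^N, and let θ be any stationary point of F_φ (with θ_N = 0). Then the energy per site e = F_φ(θ)/N and the rescaled Hessian determinant 𝒟 = |det 𝓗(θ)|^{1/(N−1)} satisfy |1 − e| ≤ 𝒟, i.e. |1 − F_φ(θ)/N| ≤ |det 𝓗(θ)|^{1/(N−1)}. -/

import Mathlib

open Real Filter

/-- The variable `s k = φ k + θ (k+1) - θ k` (indices cyclic mod `N`,
0-based; paper index `k` corresponds to `k-1` here, so `s_N` is `sVar` at `lastIdx`). -/
noncomputable def sVar (N : ℕ) (hN : 0 < N) (φ θ : Fin N → ℝ) (k : Fin N) : ℝ :=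
  φ k + θ ⟨((k : ℕ) + 1) % N, Nat.mod_lt _ hN⟩ - θ k

/-- The lattice Landau gauge functional / random phase XY Hamiltonian
`F_φ(θ) = Σ_k (1 - cos(φ_k + θ_{k+1} - θ_k))` with periodic boundary conditions. -/
noncomputable def Fxy (N : ℕ) (hN : 0 < N) (φ θ : Fin N → ℝ) : ℝ :=
  ∑ k : Fin N, (1 - Real.cos (sVar N hN φ θ k))

/-- The index of the fixed site (paper site `N`). -/
def lastIdx (N : ℕ) (hN : 0 < N) : Fin N :=
  ⟨N - 1, Nat.sub_lt hN Nat.one_pos⟩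

/-- `θ` is a stationary point of `F_φ` regarded as a function of the free
coordinates `θ_1, …, θ_{N-1}` (0-based: coordinates `k` with `k < N-1`),
with `θ` at `lastIdx` held fixed: all partial derivatives vanish. -/
noncomputable def IsStationaryPt (N : ℕ) (hN : 0 < N) (φ θ : Fin N → ℝ) : Prop :=
  ∀ k : Fin N, (k : ℕ) < N - 1 →
    deriv (fun t : ℝ => Fxy N hN φ (Function.update θ k t)) (θ k) = 0

/-- The `(N-1) × (N-1)` tridiagonal matrix with entries
`δ_{ij}(c_{i-1} + c_i) - δ_{i-1,j} c_{i-1} - δ_{i+1,j} c_i`, where indices are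
0-based (paper index `i` ↦ `i-1`) and `c_0 := c_N` (cyclic predecessor). -/
noncomputable def hessC (N : ℕ) (hN : 0 < N) (c : Fin N → ℝ) :
    Matrix (Fin (N - 1)) (Fin (N - 1)) ℝ :=
  Matrix.of fun i j =>
    (if i = j then
        c ⟨((i : ℕ) + (N - 1)) % N, Nat.mod_lt _ hN⟩ +
          c ⟨(i : ℕ), lt_of_lt_of_le i.isLt (Nat.sub_le N 1)⟩
      else 0)
    - (if (i : ℕ) = (j : ℕ) + 1 then c ⟨((i : ℕ) + (N - 1)) % N, Nat.mod_lt _ hN⟩ else 0)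
    - (if (j : ℕ) = (i : ℕ) + 1 then c ⟨(i : ℕ), lt_of_lt_of_le i.isLt (Nat.sub_le N 1)⟩ else 0)

/-- The Hessian of `F_φ` (with the last coordinate fixed) at a configuration `θ`. -/
noncomputable def hessAt (N : ℕ) (hN : 0 < N) (φ θ : Fin N → ℝ) :
    Matrix (Fin (N - 1)) (Fin (N - 1)) ℝ :=
  hessC N hN fun k => Real.cos (sVar N hN φ θ k)

/-- `F_φ` as a function of the free coordinates only: the coordinate at
`lastIdx` is overwritten by `0`. -/
noncomputable def FxyFixed (N : ℕ) (hN : 0 < N) (φ : Fin N → ℝ) (η : Fin N → ℝ) : ℝ :=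
  Fxy N hN φ (Function.update η (lastIdx N hN) 0)

/-- The value `σ = (Φ + 2πl - π Σ_{k=1}^{N-1} q_k) / (1 + Σ_{k=1}^{N-1} (-1)^{q_k})`. -/
noncomputable def sigmaVal (N : ℕ) (hN : 0 < N) (φ : Fin N → ℝ) (q : Fin N → ℕ) (l : ℤ) : ℝ :=
  ((∑ k, φ k) + 2 * Real.pi * (l : ℝ)
      - Real.pi * ∑ k ∈ Finset.univ.erase (lastIdx N hN), (q k : ℝ)) /
    (1 + ∑ k ∈ Finset.univ.erase (lastIdx N hN), (-1 : ℝ) ^ (q k))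

noncomputable def triW (n : ℕ) (w : Fin (n+1) → ℝ) : Matrix (Fin n) (Fin n) ℝ :=
  Matrix.of fun i j =>
    (if i = j then w i.castSucc + w i.succ else 0)
    - (if (i : ℕ) = (j : ℕ) + 1 then w i.castSucc else 0)
    - (if (j : ℕ) = (i : ℕ) + 1 then w i.succ else 0)

theorem triW_det : ∀ (n : ℕ) (w : Fin (n+1) → ℝ), (∀ e, w e ≠ 0) →
    (triW n w).det = (∏ e, w e) * (∑ e, (w e)⁻¹) := by
  intro n
  induction n using Nat.strong_induction_on with
  | _ n IH =>
    match n with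
    | 0 =>
      intro w hw
      simp [Matrix.det_isEmpty, Fin.prod_univ_one, Fin.sum_univ_one,
        mul_inv_cancel₀ (hw 0)]
    | 1 =>
      intro w hw
      rw [Matrix.det_fin_one]
      have h0 := hw 0; have h1 := hw 1
      simp only [triW, Matrix.of_apply, Fin.prod_univ_succ, Fin.sum_univ_succ,
        Fin.prod_univ_zero, Fin.sum_univ_zero]
      norm_num [Fin.succ_zero_eq_one]
      field_simp
      ring
    | (n+2) =>
      intro w hw
      set A := triW (n+2) w with hA
      have hA00 : A 0 0 = w 0 + w 1 := by
        simp [hA, triW]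
      have hA01 : A 0 ((0:Fin (n+1)).succ) = - w 1 := by
        simp [hA, triW, Fin.ext_iff]
      have hA0j : ∀ i : Fin n, A 0 (i.succ.succ) = 0 := by
        intro i
        simp [hA, triW, Fin.ext_iff]
      have hsub0 : A.submatrix Fin.succ ((0:Fin (n+2)).succAbove) = triW (n+1) (w ∘ Fin.succ) := by
        ext i j
        simp only [Fin.succAbove_zero, Matrix.submatrix_apply, hA, triW, Matrix.of_apply,
          Fin.succ_inj, Fin.val_succ, Function.comp_apply, Fin.succ_castSucc]
        norm_num
      have hone : (0:Fin (n+1)).succ = (1 : Fin (n+2)) := rfl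
      set B := A.submatrix Fin.succ ((1 : Fin (n+2)).succAbove) with hB
      have hsa10 : (1 : Fin (n+2)).succAbove 0 = 0 := by
        simp [Fin.succAbove, Fin.lt_def]
      have hsa1s : ∀ j : Fin n, (1 : Fin (n+2)).succAbove j.succ = j.succ.succ := by
        intro j
        simp [Fin.succAbove, Fin.lt_def]
      have hB00 : B 0 0 = - w 1 := by
        simp [hB, hsa10, hA, triW, Fin.ext_iff]
      have hBcol0 : ∀ i : Fin n, B i.succ 0 = 0 := by
        intro i
        rw [hB, Matrix.submatrix_apply, hsa10]
        simp [hA, triW, Fin.ext_iff]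
      have hBsub0 : B.submatrix Fin.succ ((0:Fin (n+1)).succAbove) =
          triW n (w ∘ Fin.succ ∘ Fin.succ) := by
        ext i j
        rw [Matrix.submatrix_apply, Fin.succAbove_zero, hB, Matrix.submatrix_apply, hsa1s]
        simp only [hA, triW, Matrix.of_apply, Fin.succ_inj, Fin.val_succ,
          Function.comp_apply, Fin.succ_castSucc]
        norm_num
      have hBdet : B.det = (- w 1) * (triW n (w ∘ Fin.succ ∘ Fin.succ)).det := by
        rw [Matrix.det_succ_row_zero, Fin.sum_univ_succ]
        rw [hB00, hBsub0]
        have : ∀ j : Fin n, (-1 : ℝ) ^ ((j.succ : Fin (n+1)) : ℕ) * B 0 j.succ *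
            (B.submatrix Fin.succ (Fin.succAbove j.succ)).det = 0 := by
          intro j
          have hcol : ∀ i : Fin n,
              (B.submatrix Fin.succ (Fin.succAbove j.succ)) i ⟨0, j.pos⟩ = 0 := by
            intro i
            rw [Matrix.submatrix_apply]
            have h0 : (j.succ : Fin (n+1)).succAbove ⟨0, j.pos⟩ = 0 := by
              simp [Fin.succAbove, Fin.lt_def, Fin.ext_iff]
            rw [h0, hBcol0]
          rw [Matrix.det_eq_zero_of_column_eq_zero ⟨0, j.pos⟩ hcol, mul_zero]
        rw [Finset.sum_congr rfl (fun j _ => this j), Finset.sum_const, smul_zero]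
        simp
      have hzero : ∀ j : Fin n, (-1:ℝ)^(((j.succ.succ : Fin (n+2))):ℕ) * A 0 j.succ.succ *
          (A.submatrix Fin.succ (Fin.succAbove j.succ.succ)).det = 0 := by
        intro j; rw [hA0j]; ring
      have hD1 := IH (n+1) (by omega) (w ∘ Fin.succ) (fun e => hw _)
      have hD0 := IH n (by omega) (w ∘ Fin.succ ∘ Fin.succ) (fun e => hw _)
      have h0 := hw 0
      have h1 := hw 1
      have h2 := hw 2
      rw [Matrix.det_succ_row_zero, Fin.sum_univ_succ, Fin.sum_univ_succ,
        Finset.sum_eq_zero (fun j _ => hzero j), hA00, hA01, hsub0, hone, hBdet, hD1, hD0]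
      simp only [Function.comp, Fin.prod_univ_succ, Fin.sum_univ_succ, Fin.val_zero,
        Fin.val_succ, Fin.val_one, pow_zero, pow_one, pow_succ, add_zero,
        Fin.succ_zero_eq_one, Fin.succ_one_eq_two]
      field_simp
      ring

lemma sVar_eq (N : ℕ) [NeZero N] (hN3 : 3 ≤ N) (h : 0 < N) (φ θ : Fin N → ℝ) (j : Fin N) :
    sVar N h φ θ j = φ j + θ (j + 1) - θ j := by
  have : (j + 1 : Fin N) = ⟨((j : ℕ) + 1) % N, Nat.mod_lt _ h⟩ := by
    apply Fin.ext
    rw [Fin.add_def, Fin.val_one', Nat.mod_eq_of_lt (show 1 < N by omega)]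
  rw [sVar, this]

lemma sins_eq (N : ℕ) [NeZero N] (hN3 : 3 ≤ N) (h : 0 < N) (φ θ : Fin N → ℝ)
    (hstat : IsStationaryPt N h φ θ) (k p : Fin N) (hk : (k : ℕ) < N - 1)
    (hp1 : p + 1 = k) :
    Real.sin (sVar N h φ θ p) = Real.sin (sVar N h φ θ k) := by
  have hone : (1 : Fin N) ≠ 0 := by
    intro he
    have := congrArg Fin.val he
    rw [Fin.val_one', Fin.val_zero, Nat.mod_eq_of_lt (show 1 < N by omega)] at this
    omega
  have haddself : ∀ a : Fin N, a + 1 ≠ a := by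
    intro a he
    exact hone (add_left_cancel (show a + 1 = a + 0 by rw [add_zero, he]))
  have hpk : p ≠ k := fun he => haddself p (hp1.trans he.symm)
  have hk1 : k + 1 ≠ k := haddself k
  set Ap := φ p - θ p with hAp
  set Ak := φ k + θ (k + 1) with hAk
  have hF : ∀ t : ℝ, Fxy N h φ (Function.update θ k t)
      = (∑ j ∈ (Finset.univ.erase k).erase p, (1 - Real.cos (sVar N h φ θ j)))
        + ((1 - Real.cos (Ap + t)) + (1 - Real.cos (Ak - t))) := by
    intro t
    have hmemk : k ∈ (Finset.univ : Finset (Fin N)) := Finset.mem_univ k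
    have hmemp : p ∈ Finset.univ.erase k := Finset.mem_erase.mpr ⟨hpk, Finset.mem_univ p⟩
    rw [Fxy, ← Finset.sum_erase_add _ _ hmemk, ← Finset.sum_erase_add _ _ hmemp]
    have h1 : ∀ j ∈ (Finset.univ.erase k).erase p,
        (1 - Real.cos (sVar N h φ (Function.update θ k t) j))
          = 1 - Real.cos (sVar N h φ θ j) := by
      intro j hj
      have hjp : j ≠ p := (Finset.mem_erase.mp hj).1
      have hjk : j ≠ k := (Finset.mem_erase.mp (Finset.mem_erase.mp hj).2).1
      have hj1 : j + 1 ≠ k := by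
        intro he; exact hjp (by rw [← hp1] at he; exact add_right_cancel he)
      rw [sVar_eq N hN3, sVar_eq N hN3, Function.update_of_ne hjk,
        Function.update_of_ne hj1]
    have h2 : (1 - Real.cos (sVar N h φ (Function.update θ k t) p))
        = 1 - Real.cos (Ap + t) := by
      rw [sVar_eq N hN3, hp1, Function.update_self, Function.update_of_ne hpk, hAp]
      congr 1
      ring
    have h3 : (1 - Real.cos (sVar N h φ (Function.update θ k t) k))
        = 1 - Real.cos (Ak - t) := by
      rw [sVar_eq N hN3, Function.update_self, Function.update_of_ne hk1, hAk]
    rw [Finset.sum_congr rfl h1, h2, h3]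
    ring
  have hder : HasDerivAt (fun t : ℝ => Fxy N h φ (Function.update θ k t))
      (Real.sin (sVar N h φ θ p) - Real.sin (sVar N h φ θ k)) (θ k) := by
    have hp' : HasDerivAt (fun t : ℝ => 1 - Real.cos (Ap + t))
        (Real.sin (Ap + θ k)) (θ k) := by
      have ha : HasDerivAt (fun t : ℝ => Ap + t) 1 (θ k) := (hasDerivAt_id _).const_add Ap
      have := (hasDerivAt_const (θ k) (1:ℝ)).sub ha.cos
      exact this.congr_deriv (by ring)
    have hk' : HasDerivAt (fun t : ℝ => 1 - Real.cos (Ak - t))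
        (- Real.sin (Ak - θ k)) (θ k) := by
      have ha : HasDerivAt (fun t : ℝ => Ak - t) (-1) (θ k) := by
        simpa using (hasDerivAt_id (θ k)).const_sub Ak
      have := (hasDerivAt_const (θ k) (1:ℝ)).sub ha.cos
      exact this.congr_deriv (by ring)
    have hsum := ((hasDerivAt_const (θ k)
        (∑ j ∈ (Finset.univ.erase k).erase p, (1 - Real.cos (sVar N h φ θ j)))).add
        (hp'.add hk'))
    have heq : (fun t : ℝ => Fxy N h φ (Function.update θ k t))
        = fun t : ℝ => (∑ j ∈ (Finset.univ.erase k).erase p, (1 - Real.cos (sVar N h φ θ j)))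
          + ((1 - Real.cos (Ap + t)) + (1 - Real.cos (Ak - t))) := funext hF
    rw [heq]
    have e1 : Ap + θ k = sVar N h φ θ p := by
      rw [sVar_eq N hN3, hp1, hAp]; ring
    have e2 : Ak - θ k = sVar N h φ θ k := by
      rw [sVar_eq N hN3, hAk]
    exact hsum.congr_deriv (by rw [e1, e2]; ring)
  have := hstat k hk
  rw [hder.deriv] at this
  linarith

lemma sins_all_eq (n : ℕ) (hN3 : 3 ≤ n + 1) (h : 0 < n + 1) (φ θ : Fin (n+1) → ℝ)
    (hstat : IsStationaryPt (n+1) h φ θ) (j : Fin (n+1)) :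
    Real.sin (sVar (n+1) h φ θ j) = Real.sin (sVar (n+1) h φ θ ⟨n, by omega⟩) := by
  haveI : NeZero (n+1) := ⟨by omega⟩
  have key : ∀ m : ℕ, (hm : m < n) →
      Real.sin (sVar (n+1) h φ θ ⟨m, by omega⟩)
        = Real.sin (sVar (n+1) h φ θ ⟨n, by omega⟩) := by
    intro m
    induction m with
    | zero =>
      intro hm
      have hadd : (⟨n, by omega⟩ : Fin (n+1)) + 1 = ⟨0, by omega⟩ := by
        apply Fin.ext
        rw [Fin.add_def, Fin.val_one']
        simp [Nat.mod_eq_of_lt (show 1 < n + 1 by omega)]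
      exact (sins_eq (n+1) hN3 h φ θ hstat ⟨0, by omega⟩ ⟨n, by omega⟩
        (by simpa using hm) hadd).symm
    | succ m IH =>
      intro hm
      have hadd : (⟨m, by omega⟩ : Fin (n+1)) + 1 = ⟨m+1, by omega⟩ := by
        apply Fin.ext
        simp only [Fin.add_def, Fin.val_one', Fin.val_mk]
        rw [Nat.mod_eq_of_lt (show 1 < n + 1 by omega), Nat.mod_eq_of_lt (by omega)]
      have := sins_eq (n+1) hN3 h φ θ hstat ⟨m+1, by omega⟩ ⟨m, by omega⟩
        (by simpa using hm) hadd
      rw [← this]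
      exact IH (by omega)
  by_cases hj : (j : ℕ) = n
  · have hje : j = ⟨n, by omega⟩ := Fin.ext (by simpa using hj)
    rw [hje]
  · have : j = ⟨(j : ℕ), by omega⟩ := by apply Fin.ext; rfl
    rw [this]
    exact key j (by omega)

lemma main (n : ℕ) (hN3 : 3 ≤ n + 1) (hodd : Odd (n+1)) (h : 0 < n+1)
    (φ θ : Fin (n+1) → ℝ) (hstat : IsStationaryPt (n+1) h φ θ) :
    |1 - Fxy (n+1) h φ θ / ((n+1 : ℕ) : ℝ)| ≤
      |(hessC (n+1) h (fun k => Real.cos (sVar (n+1) h φ θ k))).det|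
        ^ ((1 : ℝ) / (((n+1 : ℕ) : ℝ) - 1)) := by
  haveI : NeZero (n+1) := ⟨by omega⟩
  set c : Fin (n+1) → ℝ := fun k => Real.cos (sVar (n+1) h φ θ k) with hc
  set σ : ℝ := Real.sin (sVar (n+1) h φ θ ⟨n, by omega⟩) with hσ
  have hsin : ∀ j, Real.sin (sVar (n+1) h φ θ j) = σ :=
    fun j => sins_all_eq n hN3 h φ θ hstat j
  have hσ2 : σ ^ 2 ≤ 1 := by
    rw [hσ]
    nlinarith [Real.neg_one_le_sin (sVar (n+1) h φ θ ⟨n, by omega⟩),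
      Real.sin_le_one (sVar (n+1) h φ θ ⟨n, by omega⟩)]
  set r : ℝ := Real.sqrt (1 - σ^2) with hrdef
  have hr0 : 0 ≤ r := Real.sqrt_nonneg _
  have hr2 : r ^ 2 = 1 - σ ^ 2 := Real.sq_sqrt (by linarith)
  have hc2 : ∀ j, c j ^ 2 = 1 - σ ^ 2 := by
    intro j
    have h2 := Real.sin_sq_add_cos_sq (sVar (n+1) h φ θ j)
    rw [hsin j] at h2
    simp only [hc]
    linarith
  have hcr : ∀ j, c j = r ∨ c j = -r := by
    intro j
    have h1 : (c j - r) * (c j + r) = 0 := by nlinarith [hc2 j, hr2]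
    rcases mul_eq_zero.mp h1 with h2 | h2
    · left; linarith
    · right; linarith
  have hNR : ((n+1:ℕ) : ℝ) ≠ 0 := by positivity
  have hFxy : Fxy (n+1) h φ θ = ((n+1:ℕ) : ℝ) - ∑ j, c j := by
    rw [Fxy, Finset.sum_sub_distrib]
    simp [hc, Finset.card_univ]
  have hE : 1 - Fxy (n+1) h φ θ / ((n+1:ℕ) : ℝ) = (∑ j, c j) / ((n+1:ℕ) : ℝ) := by
    rw [hFxy]; field_simp; ring
  rcases hr0.eq_or_lt with hr | hr
  · have hcz : ∀ j, c j = 0 := by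
      intro j; rcases hcr j with h2 | h2 <;> rw [h2, ← hr] <;> ring
    rw [hE, Finset.sum_congr rfl (fun j _ => hcz j)]
    simp only [Finset.sum_const, smul_zero, zero_div, abs_zero]
    exact Real.rpow_nonneg (abs_nonneg _) _
  · set z : Fin (n+1) → ℤ := fun j => if c j = r then 1 else -1 with hzdef
    have hz : ∀ j, c j = (z j : ℝ) * r := by
      intro j
      by_cases hcj : c j = r
      · simp [hzdef, hcj]
      · rcases hcr j with h2 | h2
        · exact absurd h2 hcj
        · simp only [hzdef]
          rw [if_neg hcj, h2]
          push_cast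
          ring
    set Z : ℤ := ∑ j, z j with hZdef
    have hzabs : ∀ j, |z j| = 1 := by
      intro j; by_cases hcj : c j = r <;> simp [hzdef, hcj]
    have hZodd : Odd Z := by
      have h2 : (2:ℤ) ∣ ∑ j : Fin (n+1), (z j - 1) := by
        apply Finset.dvd_sum
        intro j _
        by_cases hcj : c j = r <;> simp [hzdef, hcj]
      obtain ⟨d, hd⟩ := h2
      have hsum : ∑ j : Fin (n+1), (z j - 1) = Z - (n+1 : ℤ) := by
        rw [Finset.sum_sub_distrib]
        simp [hZdef, Finset.card_univ]
      obtain ⟨m, hm⟩ := hodd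
      refine ⟨(d : ℤ) + m, ?_⟩
      rw [hsum] at hd
      have hmz : (n : ℤ) + 1 = 2 * (m : ℤ) + 1 := by exact_mod_cast hm
      omega
    have hZne : Z ≠ 0 := by
      intro h0; rw [h0] at hZodd; exact (Int.not_odd_iff_even.mpr Even.zero) hZodd
    have hZ1 : (1:ℤ) ≤ |Z| := Int.one_le_abs hZne
    have hZN : |Z| ≤ (n+1 : ℤ) := by
      calc |Z| ≤ ∑ j, |z j| := Finset.abs_sum_le_sum_abs _ _
      _ = (n+1 : ℤ) := by simp [hzabs, Finset.card_univ]
    have hcne : ∀ j, c j ≠ 0 := by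
      intro j hcon; rcases hcr j with h2 | h2 <;> rw [hcon] at h2 <;> nlinarith
    set en : Fin (n+1) := ⟨n, by omega⟩ with hen
    set w : Fin (n+1) → ℝ := fun e => c (e + en) with hw
    have hbridge : hessC (n+1) h c = triW n w := by
      ext i j
      have hv1 : (⟨((i:ℕ) + (n+1-1)) % (n+1), Nat.mod_lt _ h⟩ : Fin (n+1))
          = @Fin.castSucc n i + en := by
        apply Fin.ext
        simp [Fin.add_def, hen]
      have hv2 : (⟨(i:ℕ), lt_of_lt_of_le i.isLt (Nat.sub_le (n+1) 1)⟩ : Fin (n+1))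
          = @Fin.succ n i + en := by
        apply Fin.ext
        simp only [Fin.add_def, hen, Fin.val_succ, Fin.val_mk]
        rw [show (i:ℕ) + 1 + n = (i:ℕ) + (n+1) by omega, Nat.add_mod_right,
          Nat.mod_eq_of_lt (by omega : (i:ℕ) < n+1)]
      simp only [hessC, triW, Matrix.of_apply]
      rw [hv1, hv2]
    have hdet1 : (hessC (n+1) h c).det = (∏ e, w e) * (∑ e, (w e)⁻¹) := by
      rw [hbridge]
      exact triW_det n w (fun e => hcne _)
    have hprodw : ∏ e, w e = ∏ j, c j := by
      have h2 := Equiv.prod_comp (Equiv.addRight en) c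
      simp only [Equiv.coe_addRight] at h2
      simpa only [hw] using h2
    have hsumw : ∑ e, (w e)⁻¹ = ∑ j, (c j)⁻¹ := by
      have h2 := Equiv.sum_comp (Equiv.addRight en) (fun j => (c j)⁻¹)
      simp only [Equiv.coe_addRight] at h2
      simpa only [hw] using h2
    have hprodc : ∏ j, c j = (∏ j, (z j : ℝ)) * r ^ (n+1) := by
      rw [Finset.prod_congr rfl (fun j _ => hz j), Finset.prod_mul_distrib]
      simp [Finset.card_univ]
    have hsumc : ∑ j, c j = (Z:ℝ) * r := by
      rw [Finset.sum_congr rfl (fun j _ => hz j), ← Finset.sum_mul]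
      rw [hZdef]
      push_cast
      ring
    have hsumcinv : ∑ j, (c j)⁻¹ = (Z:ℝ) * r⁻¹ := by
      have h3 : ∀ j, (c j)⁻¹ = (z j : ℝ) * r⁻¹ := by
        intro j
        by_cases hcj : c j = r
        · simp [hzdef, hcj]
        · rcases hcr j with h2 | h2
          · exact absurd h2 hcj
          · rw [h2, inv_neg]
            simp [hzdef, hcj]
      rw [Finset.sum_congr rfl (fun j _ => h3 j), ← Finset.sum_mul]
      rw [hZdef]
      push_cast
      ring
    have habsP : |∏ j, (z j : ℝ)| = 1 := by
      rw [Finset.abs_prod]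
      rw [Finset.prod_congr rfl
        (fun j _ => by rw [← Int.cast_abs, hzabs j, Int.cast_one] : ∀ j ∈ Finset.univ, |((z j : ℤ) : ℝ)| = 1)]
      simp
    have hdetabs : |(hessC (n+1) h c).det| = r ^ n * |(Z:ℝ)| := by
      rw [hdet1, hprodw, hsumw, hprodc, hsumcinv, abs_mul, abs_mul, abs_mul, habsP,
        one_mul, abs_pow, abs_of_nonneg hr0, abs_inv, abs_of_nonneg hr0, pow_succ]
      field_simp
    have hcast : ((n+1:ℕ):ℝ) - 1 = (n:ℝ) := by push_cast; ring
    have hZR1 : (1:ℝ) ≤ |(Z:ℝ)| := by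
      rw [← Int.cast_abs]; exact_mod_cast hZ1
    have hRHS : |(hessC (n+1) h c).det| ^ ((1:ℝ)/(((n+1:ℕ):ℝ)-1))
        = r * |(Z:ℝ)| ^ ((n:ℝ))⁻¹ := by
      rw [hdetabs, hcast, one_div,
        Real.mul_rpow (by positivity) (abs_nonneg _),
        Real.pow_rpow_inv_natCast hr0 (by omega : n ≠ 0)]
    have hEabs : |1 - Fxy (n+1) h φ θ / ((n+1:ℕ):ℝ)| = |(Z:ℝ)| * r / ((n+1:ℕ):ℝ) := by
      rw [hE, hsumc, abs_div, abs_mul, abs_of_nonneg hr0,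
        abs_of_pos (by positivity : (0:ℝ) < ((n+1:ℕ):ℝ))]
    rw [hEabs, hRHS]
    have h1 : |(Z:ℝ)| / ((n+1:ℕ):ℝ) ≤ 1 := by
      rw [div_le_one (by positivity)]
      have : (|Z| : ℝ) ≤ ((n+1:ℤ) : ℝ) := by exact_mod_cast hZN
      rw [← Int.cast_abs]
      push_cast at this ⊢
      linarith
    have h2 : (1:ℝ) ≤ |(Z:ℝ)| ^ ((n:ℝ))⁻¹ := by
      calc (1:ℝ) = |(Z:ℝ)| ^ (0:ℝ) := (Real.rpow_zero _).symm
      _ ≤ _ := Real.rpow_le_rpow_of_exponent_le hZR1 (by positivity)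
    have h3 : |(Z:ℝ)| * r / ((n+1:ℕ):ℝ) = r * (|(Z:ℝ)| / ((n+1:ℕ):ℝ)) := by ring
    rw [h3]
    calc r * (|(Z:ℝ)| / ((n+1:ℕ):ℝ)) ≤ r * 1 := by
          exact mul_le_mul_of_nonneg_left h1 hr0
    _ = r := mul_one r
    _ = r * 1 := (mul_one r).symm
    _ ≤ r * (|(Z:ℝ)| ^ ((n:ℝ))⁻¹) := mul_le_mul_of_nonneg_left h2 hr0

/-- at any stationary point of `F_φ` (odd `N`), the energy per
site `e = F_φ(θ)/N` and the rescaled Hessian determinant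
`𝒟 = |det 𝓗(θ)|^{1/(N-1)}` satisfy `|1 - e| ≤ 𝒟`. -/
theorem stmt15 (N : ℕ) (hN : 3 ≤ N) (hodd : Odd N) (φ θ : Fin N → ℝ)
    (hlast : θ (lastIdx N (by omega)) = 0)
    (hstat : IsStationaryPt N (by omega) φ θ) :
    |1 - Fxy N (by omega) φ θ / N| ≤
      |(hessAt N (by omega) φ θ).det| ^ ((1 : ℝ) / ((N : ℝ) - 1)) := by
  obtain ⟨n, rfl⟩ : ∃ n, N = n + 1 := ⟨N - 1, by omega⟩
  exact main n hN hodd (by omega) φ θ hstat
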